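/- Let n ≥ 1, let λ_1 ≥ λ_2 ≥ … ≥ λ_n > 0, let 1 ≤ q ≤ ∞, and for an invertible linear map T of ℝ^n define Γ(T) = max_{‖x‖_q = 1} ‖x‖_{T B_1^n}, the reciprocal of the largest ε with ε·B_q^n ⊆ T B_1^n. Then the supremum of Γ(O·D·U) over all orthogonal matrices O, U (where D = diag(λ_1, …, λ_n)) — i.e., over all T with singular values (λ_i) — equals λ_n^{−1}·n^{1−1/q} if q ≥ 2, and equals λ_n^{−1}·n^{1/2} if 1 ≤ q < 2. -/

import Mathlib

open scoped BigOperators ENNReal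
open Set Pointwise

/-- The `ℓ_q^n` norm on `ℝ^n` (`1 ≤ q ≤ ∞`). -/
noncomputable def pnorm (q : ℝ≥0∞) {n : ℕ} (x : EuclideanSpace ℝ (Fin n)) : ℝ :=
  if q = ∞ then ⨆ i, |x i| else (∑ i, |x i| ^ q.toReal) ^ q.toReal⁻¹

/-- The unit ball of `ℓ_q^n` (`1 ≤ q ≤ ∞`), as a subset of `ℝ^n`. -/
noncomputable def pball (q : ℝ≥0∞) (n : ℕ) : Set (EuclideanSpace ℝ (Fin n)) :=
  {x | pnorm q x ≤ 1}

/-- The diagonal map `x ↦ (l_i·x_i)_i` on `ℝ^n`. -/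
noncomputable def diagMap (n : ℕ) (l : Fin n → ℝ) :
    EuclideanSpace ℝ (Fin n) →ₗ[ℝ] EuclideanSpace ℝ (Fin n) where
  toFun x := WithLp.toLp 2 (fun i => l i * x i)
  map_add' x y := by ext i; simp [mul_add]
  map_smul' c x := by ext i; simp <;> ring

/-- `Γ(T) = max_{‖x‖_q = 1} ‖x‖_{T B_1^n}`, the reciprocal of the largest `ε` with
`ε·B_q^n ⊆ T B_1^n`; here `‖·‖_{T B_1^n}` is the Minkowski gauge of `T B_1^n`. -/
noncomputable def GammaT (q : ℝ≥0∞) (n : ℕ)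
    (T : EuclideanSpace ℝ (Fin n) → EuclideanSpace ℝ (Fin n)) : ℝ :=
  sSup {r : ℝ | ∃ x, pnorm q x = 1 ∧ r = gauge (T '' pball 1 n) x}

/- ### Auxiliary lemmas -/

lemma gauge_of_norm {E : Type*} [AddCommGroup E] [Module ℝ E] (N : E → ℝ)
    (hN0 : ∀ x, 0 ≤ N x) (hhom : ∀ (c : ℝ) x, N (c • x) = |c| * N x) (x : E) :
    gauge {y | N y ≤ 1} x = N x := by
  have hset : {r ∈ Set.Ioi (0:ℝ) | x ∈ r • {y | N y ≤ 1}} = {r | 0 < r ∧ N x ≤ r} := by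
    ext r
    simp only [Set.mem_sep_iff, Set.mem_Ioi, Set.mem_setOf_eq, and_congr_right_iff]
    intro hr
    rw [Set.mem_smul_set_iff_inv_smul_mem₀ hr.ne']
    simp only [Set.mem_setOf_eq, hhom, abs_of_pos (inv_pos.2 hr)]
    rw [inv_mul_le_iff₀ hr, mul_one]
  rw [gauge_def, hset]
  rcases eq_or_lt_of_le (hN0 x) with h0 | h0
  · have : {r : ℝ | 0 < r ∧ N x ≤ r} = Set.Ioi 0 := by
      ext r; simp [← h0, le_of_lt]
      intro hr; linarith
    rw [this, csInf_Ioi, ← h0]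
  · have : {r : ℝ | 0 < r ∧ N x ≤ r} = Set.Ici (N x) := by
      ext r; constructor
      · rintro ⟨_, h⟩; exact h
      · intro h; exact ⟨lt_of_lt_of_le h0 h, h⟩
    rw [this, csInf_Ici]

lemma pnorm_one_eq {n : ℕ} (x : EuclideanSpace ℝ (Fin n)) : pnorm 1 x = ∑ i, |x i| := by
  simp [pnorm]

lemma pnorm_one_nonneg {n : ℕ} (x : EuclideanSpace ℝ (Fin n)) : 0 ≤ pnorm 1 x := by
  rw [pnorm_one_eq]; positivity

lemma pnorm_one_smul {n : ℕ} (c : ℝ) (x : EuclideanSpace ℝ (Fin n)) :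
    pnorm 1 (c • x) = |c| * pnorm 1 x := by
  simp only [pnorm_one_eq, Finset.mul_sum]
  refine Finset.sum_congr rfl fun i _ => ?_
  show |(c • x) i| = _
  simp [abs_mul]

lemma image_pball_one {n : ℕ} (T S : EuclideanSpace ℝ (Fin n) → EuclideanSpace ℝ (Fin n))
    (hST : ∀ x, S (T x) = x) (hTS : ∀ x, T (S x) = x) :
    T '' pball 1 n = {y | pnorm 1 (S y) ≤ 1} := by
  ext y
  constructor
  · rintro ⟨x, hx, rfl⟩
    simpa [hST, pball] using hx
  · intro hy
    exact ⟨S y, hy, hTS y⟩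

lemma l1_le_sqrt_l2 {n : ℕ} (z : EuclideanSpace ℝ (Fin n)) :
    ∑ i, |z i| ≤ Real.sqrt n * ‖z‖ := by
  have h := Real.inner_le_weight_mul_Lp_of_nonneg (Finset.univ (α := Fin n)) (p := 2)
    one_le_two (fun _ => 1) (fun i => |z i|) (fun _ => zero_le_one) (fun i => abs_nonneg _)
  simp only [one_mul, Finset.sum_const, Finset.card_univ, Fintype.card_fin, nsmul_eq_mul,
    mul_one] at h
  calc ∑ i, |z i| ≤ (n : ℝ) ^ (1 - (2:ℝ)⁻¹) * (∑ i, |z i| ^ (2:ℝ)) ^ (2:ℝ)⁻¹ := h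
    _ = Real.sqrt n * ‖z‖ := by
        congr 1
        · rw [Real.sqrt_eq_rpow]; norm_num
        · rw [EuclideanSpace.norm_eq]
          rw [Real.sqrt_eq_rpow]
          congr 1
          · refine Finset.sum_congr rfl fun i _ => ?_
            rw [Real.norm_eq_abs, ← Real.rpow_natCast |z i| 2]
            norm_num
          · norm_num

lemma euclidean_norm_le {n : ℕ} (x : EuclideanSpace ℝ (Fin n)) (c : ℝ) (hc : 0 ≤ c)
    (h : ∑ i, (x i) ^ 2 ≤ c ^ 2) : ‖x‖ ≤ c := by
  rw [EuclideanSpace.norm_eq]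
  have : ∑ i, ‖x i‖ ^ 2 ≤ c ^ 2 := by
    simpa [Real.norm_eq_abs, sq_abs] using h
  calc Real.sqrt (∑ i, ‖x i‖ ^ 2) ≤ Real.sqrt (c ^ 2) := Real.sqrt_le_sqrt this
    _ = c := Real.sqrt_sq hc

lemma euclidean_norm_eq {n : ℕ} (x : EuclideanSpace ℝ (Fin n)) (c : ℝ) (hc : 0 ≤ c)
    (h : ∑ i, (x i) ^ 2 = c ^ 2) : ‖x‖ = c := by
  rw [EuclideanSpace.norm_eq]
  have : ∑ i, ‖x i‖ ^ 2 = c ^ 2 := by simpa [Real.norm_eq_abs, sq_abs] using h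
  rw [this, Real.sqrt_sq hc]

lemma diagMap_norm_le {n : ℕ} (l' : Fin n → ℝ) (m : ℝ) (hm : 0 ≤ m)
    (h : ∀ i, |l' i| ≤ m) (y : EuclideanSpace ℝ (Fin n)) :
    ‖(diagMap n l') y‖ ≤ m * ‖y‖ := by
  refine euclidean_norm_le _ _ (by positivity) ?_
  have hy : ∀ i, ((diagMap n l') y) i = l' i * y i := fun i => rfl
  have hnorm : ‖y‖ ^ 2 = ∑ i, (y i) ^ 2 := by
    rw [EuclideanSpace.norm_eq, Real.sq_sqrt (by positivity)]
    exact Finset.sum_congr rfl fun i _ => by rw [Real.norm_eq_abs, sq_abs]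
  rw [mul_pow, hnorm, Finset.mul_sum]
  refine Finset.sum_le_sum fun i _ => ?_
  rw [hy, mul_pow]
  have : (l' i) ^ 2 ≤ m ^ 2 := by
    rw [← sq_abs]; exact pow_le_pow_left₀ (abs_nonneg _) (h i) 2
  nlinarith [sq_nonneg (y i)]

lemma sum_pow_eq_one {n : ℕ} {q : ℝ≥0∞} (hq : 1 ≤ q) (hq' : q ≠ ∞)
    {x : EuclideanSpace ℝ (Fin n)} (hx : pnorm q x = 1) :
    ∑ i, |x i| ^ q.toReal = 1 := by
  have ht : 1 ≤ q.toReal := by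
    have := ENNReal.toReal_mono hq' hq
    simpa using this
  have ht0 : q.toReal ≠ 0 := by linarith
  have hx' : (∑ i, |x i| ^ q.toReal) ^ q.toReal⁻¹ = 1 := by
    simpa [pnorm, hq'] using hx
  have hs : 0 ≤ ∑ i, |x i| ^ q.toReal :=
    Finset.sum_nonneg fun i _ => Real.rpow_nonneg (abs_nonneg _) _
  calc ∑ i, |x i| ^ q.toReal
      = ((∑ i, |x i| ^ q.toReal) ^ q.toReal⁻¹) ^ q.toReal := by
        rw [Real.rpow_inv_rpow hs ht0]
    _ = 1 := by rw [hx', Real.one_rpow]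

lemma norm_le_c {n : ℕ} {q : ℝ≥0∞} (hq : 1 ≤ q)
    {x : EuclideanSpace ℝ (Fin n)} (hx : pnorm q x = 1) :
    ‖x‖ ≤ if 2 ≤ q then (n : ℝ) ^ ((2:ℝ)⁻¹ - q.toReal⁻¹) else 1 := by
  by_cases hq2 : 2 ≤ q
  · rw [if_pos hq2]
    by_cases hq' : q = ∞
    · subst hq'
      have hx' : ⨆ i, |x i| = 1 := by simpa [pnorm] using hx
      have hb : ∀ i, |x i| ≤ 1 := by
        intro i
        rw [← hx']
        exact le_ciSup (f := fun j => |x j|) (Set.Finite.bddAbove (Set.finite_range _)) i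
      refine euclidean_norm_le _ _ (Real.rpow_nonneg (Nat.cast_nonneg n) _) ?_
      have : ((n:ℝ) ^ ((2:ℝ)⁻¹ - (⊤ : ℝ≥0∞).toReal⁻¹)) ^ 2 = (n:ℝ) := by
        rw [← Real.rpow_natCast ((n:ℝ) ^ _) 2, ← Real.rpow_mul (Nat.cast_nonneg n)]
        norm_num
      rw [this]
      calc ∑ i, (x i) ^ 2 ≤ ∑ _i : Fin n, 1 := by
            refine Finset.sum_le_sum fun i _ => ?_
            rw [← sq_abs]
            nlinarith [hb i, abs_nonneg (x i)]
        _ = (n : ℝ) := by simp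
    · have ht2 : 2 ≤ q.toReal := by
        have := ENNReal.toReal_mono hq' hq2
        simpa using this
      have ht0 : (0:ℝ) < q.toReal := by linarith
      set t := q.toReal with htdef
      have hsum : ∑ i, |x i| ^ t = 1 := sum_pow_eq_one hq hq' hx
      have hp : 1 ≤ t / 2 := by linarith
      have h := Real.inner_le_weight_mul_Lp_of_nonneg (Finset.univ (α := Fin n)) hp
        (fun _ => 1) (fun i => (x i) ^ 2) (fun _ => zero_le_one) (fun i => sq_nonneg _)
      simp only [one_mul, Finset.sum_const, Finset.card_univ, Fintype.card_fin, nsmul_eq_mul,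
        mul_one] at h
      have hpow : ∀ i, ((x i) ^ 2) ^ (t / 2) = |x i| ^ t := by
        intro i
        rw [← sq_abs, ← Real.rpow_natCast |x i| 2, ← Real.rpow_mul (abs_nonneg _)]
        norm_num
        ring_nf
      rw [Finset.sum_congr rfl (fun i _ => hpow i), hsum, Real.one_rpow, mul_one] at h
      refine euclidean_norm_le _ _ (Real.rpow_nonneg (Nat.cast_nonneg n) _) ?_
      have hc2 : ((n:ℝ) ^ ((2:ℝ)⁻¹ - t⁻¹)) ^ 2 = (n:ℝ) ^ (1 - (t/2)⁻¹) := by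
        rw [← Real.rpow_natCast ((n:ℝ) ^ _) 2, ← Real.rpow_mul (Nat.cast_nonneg n)]
        congr 1
        rw [inv_div]
        push_cast
        ring
      rw [hc2]
      exact h
  · rw [if_neg hq2]
    have hq' : q ≠ ∞ := by
      intro h; exact hq2 (h ▸ le_top)
    have ht1 : 1 ≤ q.toReal := by
      have := ENNReal.toReal_mono hq' hq; simpa using this
    have ht2 : q.toReal ≤ 2 := by
      have h := ENNReal.toReal_mono (by norm_num : (2:ℝ≥0∞) ≠ ∞) (not_le.1 hq2).le
      simpa using h
    set t := q.toReal
    have hsum : ∑ i, |x i| ^ t = 1 := sum_pow_eq_one hq hq' hx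
    have hb : ∀ i, |x i| ≤ 1 := by
      intro i
      by_contra hgt
      push_neg at hgt
      have h1 : (1:ℝ) < |x i| ^ t :=
        Real.one_lt_rpow_iff_of_pos (by positivity) |>.2 (Or.inl ⟨hgt, by linarith⟩)
      have h2 : |x i| ^ t ≤ ∑ j, |x j| ^ t :=
        Finset.single_le_sum (fun j _ => Real.rpow_nonneg (abs_nonneg _) _) (Finset.mem_univ i)
      rw [hsum] at h2
      linarith
    refine euclidean_norm_le _ _ zero_le_one ?_
    rw [one_pow, ← hsum]
    refine Finset.sum_le_sum fun i _ => ?_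
    rcases eq_or_lt_of_le (abs_nonneg (x i)) with h0 | h0
    · rw [← sq_abs, ← h0]
      simp [Real.zero_rpow (by linarith : t ≠ 0)]
    · rw [← sq_abs, ← Real.rpow_natCast |x i| 2]
      exact Real.rpow_le_rpow_of_exponent_ge h0 (hb i) (by norm_num; linarith)

lemma norm_const {n : ℕ} (a : ℝ) (ha : 0 ≤ a) (x : EuclideanSpace ℝ (Fin n))
    (hx : ∀ i, x i = a) : ‖x‖ = Real.sqrt n * a := by
  refine euclidean_norm_eq _ _ (by positivity) ?_
  simp only [hx, Finset.sum_const, Finset.card_univ, Fintype.card_fin, nsmul_eq_mul]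
  rw [mul_pow, Real.sq_sqrt (Nat.cast_nonneg n)]

lemma pnorm_const_eq_one {n : ℕ} (hn : 0 < n) (q : ℝ≥0∞) (hq : 1 ≤ q)
    (x : EuclideanSpace ℝ (Fin n)) (hx : ∀ i, x i = (n:ℝ) ^ (-(q.toReal⁻¹))) :
    pnorm q x = 1 := by
  have hn' : (0:ℝ) < n := by exact_mod_cast hn
  by_cases hq' : q = ∞
  · subst hq'
    have : Nonempty (Fin n) := ⟨⟨0, hn⟩⟩
    simp [pnorm, hx, ciSup_const]
  · have ht : 1 ≤ q.toReal := by
      have := ENNReal.toReal_mono hq' hq; simpa using this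
    have ht0 : q.toReal ≠ 0 := by linarith
    have hpos : (0:ℝ) < (n:ℝ) ^ (-(q.toReal⁻¹)) := Real.rpow_pos_of_pos hn' _
    simp only [pnorm, if_neg hq']
    have h1 : ∀ i : Fin n, |x i| ^ q.toReal = (n:ℝ)⁻¹ := by
      intro i
      rw [hx i, abs_of_pos hpos, ← Real.rpow_mul hn'.le, neg_mul, inv_mul_cancel₀ ht0,
        Real.rpow_neg_one]
    rw [Finset.sum_congr rfl (fun i _ => h1 i)]
    simp only [Finset.sum_const, Finset.card_univ, Fintype.card_fin, nsmul_eq_mul]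
    rw [mul_inv_cancel₀ hn'.ne', Real.one_rpow]

lemma pnorm_single_eq_one {n : ℕ} (i0 : Fin n) {q : ℝ≥0∞} (hq : 1 ≤ q) (hq' : q ≠ ∞) :
    pnorm q (EuclideanSpace.single i0 (1:ℝ)) = 1 := by
  have ht : 1 ≤ q.toReal := by
    have := ENNReal.toReal_mono hq' hq; simpa using this
  have ht0 : q.toReal ≠ 0 := by linarith
  simp only [pnorm, if_neg hq']
  have h1 : ∀ j : Fin n, |EuclideanSpace.single i0 (1:ℝ) j| ^ q.toReal
      = if j = i0 then 1 else 0 := by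
    intro j
    rw [EuclideanSpace.single_apply]
    by_cases h : j = i0 <;> simp [h, Real.zero_rpow ht0]
  rw [Finset.sum_congr rfl (fun j _ => h1 j), Finset.sum_ite_eq' Finset.univ i0 (fun _ => (1:ℝ))]
  simp

lemma norm_const_rpow {n : ℕ} (hn : 0 < n) (b : ℝ) (x : EuclideanSpace ℝ (Fin n))
    (hx : ∀ i, x i = (n:ℝ) ^ b) : ‖x‖ = (n:ℝ) ^ ((2:ℝ)⁻¹ + b) := by
  have hn' : (0:ℝ) < n := by exact_mod_cast hn
  rw [norm_const _ (Real.rpow_nonneg hn'.le _) x hx, Real.sqrt_eq_rpow,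
    ← Real.rpow_add hn']
  norm_num

/- ### Main theorem -/

/-- For nonincreasing singular values `λ_1 ≥ … ≥ λ_n > 0`, the supremum of
`Γ(O·D·U)` over all orthogonal `O, U` (i.e., over all invertible `T` with singular values
`(λ_i)`) equals `λ_n^{-1}·n^{1-1/q}` if `q ≥ 2` and `λ_n^{-1}·n^{1/2}` if `1 ≤ q < 2`. -/
theorem stmt17 (n : ℕ) (hn : 0 < n) (l : Fin n → ℝ)
    (hdec : ∀ i j : Fin n, i ≤ j → l j ≤ l i) (hpos : ∀ i, 0 < l i)
    (q : ℝ≥0∞) (hq : 1 ≤ q) :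
    sSup {g : ℝ | ∃ O U : EuclideanSpace ℝ (Fin n) ≃ₗᵢ[ℝ] EuclideanSpace ℝ (Fin n),
        g = GammaT q n (⇑O ∘ ⇑(diagMap n l) ∘ ⇑U)} =
      (l ⟨n - 1, by omega⟩)⁻¹ *
        (if 2 ≤ q then (n : ℝ) ^ (1 - q.toReal⁻¹) else Real.sqrt n) := by
  have hn' : (0:ℝ) < n := by exact_mod_cast hn
  set i0 : Fin n := ⟨n - 1, by omega⟩ with hi0
  set m : ℝ := (l i0)⁻¹ with hm
  have hm0 : 0 < m := inv_pos.2 (hpos i0)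
  set l' : Fin n → ℝ := fun i => (l i)⁻¹ with hl'
  have hl'bd : ∀ i, |l' i| ≤ m := by
    intro i
    have hile : i ≤ i0 := by
      rcases i with ⟨iv, hiv⟩
      simp only [hi0, Fin.mk_le_mk, Fin.le_def]
      omega
    have := hdec i i0 hile
    rw [abs_of_pos (inv_pos.2 (hpos i))]
    exact inv_anti₀ (hpos i0) this
  set c : ℝ := if 2 ≤ q then (n : ℝ) ^ ((2:ℝ)⁻¹ - q.toReal⁻¹) else 1 with hc
  have hc0 : 0 ≤ c := by
    rw [hc]; split
    · exact Real.rpow_nonneg hn'.le _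
    · exact zero_le_one
  set V : ℝ := m * (Real.sqrt n * c) with hV
  have hV0 : 0 ≤ V := by positivity
  -- the inverse map and the gauge formula
  have diag_apply : ∀ (f : Fin n → ℝ) (z : EuclideanSpace ℝ (Fin n)) (i : Fin n),
      (diagMap n f) z i = f i * z i := fun _ _ _ => rfl
  set E := EuclideanSpace ℝ (Fin n)
  have hgauge : ∀ (O U : E ≃ₗᵢ[ℝ] E) (x : E),
      gauge ((⇑O ∘ ⇑(diagMap n l) ∘ ⇑U) '' pball 1 n) x
        = pnorm 1 (U.symm ((diagMap n l') (O.symm x))) := by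
    intro O U x
    set T : E → E := ⇑O ∘ ⇑(diagMap n l) ∘ ⇑U with hT
    set S : E → E := fun y => U.symm ((diagMap n l') (O.symm y)) with hS
    have hST : ∀ x, S (T x) = x := by
      intro x
      show U.symm ((diagMap n l') (O.symm (O ((diagMap n l) (U x))))) = x
      rw [O.symm_apply_apply]
      have : (diagMap n l') ((diagMap n l) (U x)) = U x := by
        ext i
        rw [diag_apply, diag_apply, ← mul_assoc, inv_mul_cancel₀ (hpos i).ne', one_mul]
      rw [this, U.symm_apply_apply]
    have hTS : ∀ y, T (S y) = y := by
      intro y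
      show O ((diagMap n l) (U (U.symm ((diagMap n l') (O.symm y))))) = y
      rw [U.apply_symm_apply]
      have : (diagMap n l) ((diagMap n l') (O.symm y)) = O.symm y := by
        ext i
        rw [diag_apply, diag_apply, ← mul_assoc, mul_inv_cancel₀ (hpos i).ne', one_mul]
      rw [this, O.apply_symm_apply]
    rw [image_pball_one T S hST hTS]
    exact gauge_of_norm (fun y => pnorm 1 (S y)) (fun y => pnorm_one_nonneg _)
      (fun a y => by
        have hSs : S (a • y) = a • S y := by
          show U.symm ((diagMap n l') (O.symm (a • y))) = _
          rw [map_smul, map_smul, map_smul]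
        show pnorm 1 (S (a • y)) = |a| * pnorm 1 (S y)
        rw [hSs, pnorm_one_smul]) x
  -- uniform upper bound
  have hbound : ∀ (O U : E ≃ₗᵢ[ℝ] E) (x : E), pnorm q x = 1 →
      pnorm 1 (U.symm ((diagMap n l') (O.symm x))) ≤ V := by
    intro O U x hx
    rw [pnorm_one_eq]
    calc ∑ i, |(U.symm ((diagMap n l') (O.symm x))) i|
        ≤ Real.sqrt n * ‖U.symm ((diagMap n l') (O.symm x))‖ := l1_le_sqrt_l2 _
      _ = Real.sqrt n * ‖(diagMap n l') (O.symm x)‖ := by rw [U.symm.norm_map]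
      _ ≤ Real.sqrt n * (m * ‖O.symm x‖) := by
          have := diagMap_norm_le l' m hm0.le hl'bd (O.symm x)
          exact mul_le_mul_of_nonneg_left this (Real.sqrt_nonneg n)
      _ = Real.sqrt n * (m * ‖x‖) := by rw [O.symm.norm_map]
      _ ≤ Real.sqrt n * (m * c) := by
          have := norm_le_c hq hx
          rw [← hc] at this
          have h2 : m * ‖x‖ ≤ m * c := mul_le_mul_of_nonneg_left this hm0.le
          exact mul_le_mul_of_nonneg_left h2 (Real.sqrt_nonneg n)
      _ = V := by rw [hV]; ring
  have hGamma_le : ∀ (O U : E ≃ₗᵢ[ℝ] E),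
      GammaT q n (⇑O ∘ ⇑(diagMap n l) ∘ ⇑U) ≤ V := by
    intro O U
    refine Real.sSup_le ?_ hV0
    rintro r ⟨x, hx, rfl⟩
    rw [hgauge]
    exact hbound O U x hx
  -- the witness vector x0 with pnorm q x0 = 1 and ‖x0‖ = c
  obtain ⟨x0, hx0q, hx0n⟩ : ∃ x0 : E, pnorm q x0 = 1 ∧ ‖x0‖ = c := by
    by_cases hq2 : 2 ≤ q
    · refine ⟨(WithLp.toLp 2 (fun _ => (n:ℝ) ^ (-(q.toReal⁻¹))) : EuclideanSpace ℝ (Fin n)),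
        pnorm_const_eq_one hn q hq _ (fun _ => rfl), ?_⟩
      rw [norm_const_rpow hn _ _ (fun _ => rfl), hc, if_pos hq2, sub_eq_add_neg]
    · have hq' : q ≠ ∞ := fun h => hq2 (h ▸ le_top)
      refine ⟨EuclideanSpace.single i0 1, pnorm_single_eq_one i0 hq hq', ?_⟩
      rw [hc, if_neg hq2, EuclideanSpace.norm_single]
      exact norm_one
  -- choice of O, U
  set e : E := EuclideanSpace.single i0 (1:ℝ) with he
  have hene : ‖e‖ = 1 := by rw [he, EuclideanSpace.norm_single]; exact norm_one
  have hce : ‖c • e‖ = c := by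
    rw [norm_smul, hene, mul_one, Real.norm_eq_abs, abs_of_nonneg hc0]
  set v : E := (WithLp.toLp 2 (fun _ => (n:ℝ) ^ (-(2:ℝ)⁻¹)) : EuclideanSpace ℝ (Fin n)) with hv
  have hvn : ‖v‖ = 1 := by
    rw [norm_const_rpow hn _ _ (fun _ => rfl)]
    norm_num
  set O0 : E ≃ₗᵢ[ℝ] E := Submodule.reflection (ℝ ∙ (x0 - c • e))ᗮ with hO0
  set U0 : E ≃ₗᵢ[ℝ] E := Submodule.reflection (ℝ ∙ (e - v))ᗮ with hU0
  have hO0x0 : O0.symm x0 = c • e := by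
    rw [hO0, Submodule.reflection_symm]
    exact Submodule.reflection_sub (hx0n.trans hce.symm)
  have hU0e : U0.symm e = v := by
    rw [hU0, Submodule.reflection_symm]
    exact Submodule.reflection_sub (hene.trans hvn.symm)
  -- the value at the witness
  have hval : pnorm 1 (U0.symm ((diagMap n l') (O0.symm x0))) = V := by
    rw [hO0x0]
    have hD : (diagMap n l') (c • e) = (c * m) • e := by
      ext i
      rw [diag_apply]
      show l' i * (c * e i) = (c * m) * e i
      rw [he]
      by_cases hie : i = i0
      · subst hie
        simp [EuclideanSpace.single_apply, hl', hm]
        ring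
      · simp [EuclideanSpace.single_apply, hie]
    rw [hD, map_smul, hU0e, pnorm_one_smul, pnorm_one_eq]
    have hsv : ∑ i, |v i| = Real.sqrt n := by
      have : ∀ i : Fin n, |v i| = (n:ℝ) ^ (-(2:ℝ)⁻¹) := by
        intro i
        rw [hv]
        exact abs_of_pos (Real.rpow_pos_of_pos hn' _)
      rw [Finset.sum_congr rfl (fun i _ => this i)]
      simp only [Finset.sum_const, Finset.card_univ, Fintype.card_fin, nsmul_eq_mul]
      rw [Real.sqrt_eq_rpow]
      nth_rewrite 1 [← Real.rpow_one (n:ℝ)]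
      rw [← Real.rpow_add hn']
      norm_num
    rw [hsv, abs_of_nonneg (by positivity : (0:ℝ) ≤ c * m), hV]
    ring
  -- GammaT at the chosen O, U equals V
  have hbdd : BddAbove {r : ℝ | ∃ x, pnorm q x = 1 ∧
      r = gauge ((⇑O0 ∘ ⇑(diagMap n l) ∘ ⇑U0) '' pball 1 n) x} := by
    refine ⟨V, ?_⟩
    rintro r ⟨x, hx, rfl⟩
    rw [hgauge]
    exact hbound O0 U0 x hx
  have hGamma0 : GammaT q n (⇑O0 ∘ ⇑(diagMap n l) ∘ ⇑U0) = V := by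
    refine le_antisymm (hGamma_le O0 U0) ?_
    refine le_csSup hbdd ⟨x0, hx0q, ?_⟩
    rw [hgauge]
    exact hval.symm
  -- conclude
  have hVeq : (l i0)⁻¹ *
      (if 2 ≤ q then (n : ℝ) ^ (1 - q.toReal⁻¹) else Real.sqrt n) = V := by
    rw [hV, hc, ← hm]
    by_cases hq2 : 2 ≤ q
    · rw [if_pos hq2, if_pos hq2]
      congr 1
      rw [Real.sqrt_eq_rpow, ← Real.rpow_add hn']
      congr 1
      ring
    · rw [if_neg hq2, if_neg hq2, mul_one]
  rw [hVeq]
  apply IsGreatest.csSup_eq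
  constructor
  · exact ⟨O0, U0, hGamma0.symm⟩
  · rintro g ⟨O, U, rfl⟩
    exact hGamma_le O U
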